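/- Let k be a field of characteristic 0 and U = k⟨⟨X₀,X₁⟩⟩. The bracket {ψ₁,ψ₂} = d_{ψ₂}(ψ₁) − d_{ψ₁}(ψ₂) − [ψ₁,ψ₂] (where d_ψ is the derivation with d_ψ(X₀)=0, d_ψ(X₁)=[X₁,ψ]) makes U into a Lie algebra: it is bilinear, alternating, and satisfies the Jacobi identity. -/

import Mathlib

/- STATEMENT 14: the bracket {ψ₁,ψ₂} = d_{ψ₂}(ψ₁) − d_{ψ₁}(ψ₂) − [ψ₁,ψ₂] makes
k⟨⟨X₀,X₁⟩⟩ a Lie algebra: it is bilinear, alternating and satisfies the Jacobi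
identity. -/

noncomputable section

variable (k : Type) [Field k] [CharZero k]

abbrev U := FreeAlgebra k (Fin 2)

def X0 : U k := FreeAlgebra.ι k 0
def X1 : U k := FreeAlgebra.ι k 1

def derOn (g : Fin 2 → U k) : U k →ₗ[k] U k :=
  (FreeAlgebra.basisFreeMonoid k (Fin 2)).constr k fun w =>
    ∑ i ∈ Finset.range (FreeMonoid.toList w).length,
      (((FreeMonoid.toList w).take i).map (FreeAlgebra.ι k)).prod *
        g ((FreeMonoid.toList w).getD i 0) *
        (((FreeMonoid.toList w).drop (i + 1)).map (FreeAlgebra.ι k)).prod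

/-- `d_ψ`. -/
def dF (ψ : U k) : U k →ₗ[k] U k := derOn k ![0, X1 k * ψ - ψ * X1 k]

/-- `s_ψ(v) = ψ·v + d_ψ(v)`. -/
def sF (ψ : U k) (v : U k) : U k := ψ * v + dF k ψ v

/-- The Ihara-type bracket `{ψ₁,ψ₂} = d_{ψ₂}(ψ₁) − d_{ψ₁}(ψ₂) − [ψ₁,ψ₂]`. -/
def br (ψ₁ ψ₂ : U k) : U k := dF k ψ₂ ψ₁ - dF k ψ₁ ψ₂ - (ψ₁ * ψ₂ - ψ₂ * ψ₁)

/-! ### Auxiliary development -/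

set_option linter.unusedSectionVars false
set_option maxHeartbeats 1000000

open TrivSqZeroExt

def Phi (g : Fin 2 → U k) : U k →ₐ[k] TrivSqZeroExt (U k) (U k) :=
  FreeAlgebra.lift k (fun i => inl (FreeAlgebra.ι k i) + inr (g i))

lemma fst_Phi (g : Fin 2 → U k) (v : U k) : (Phi k g v).fst = v := by
  have : (TrivSqZeroExt.fstHom k (U k) (U k)).comp (Phi k g) = AlgHom.id k (U k) := by
    apply FreeAlgebra.hom_ext; funext i; simp [Phi]
  exact congrArg (fun f => f v) (congrArg DFunLike.coe this)

def Dmap (g : Fin 2 → U k) : U k →ₗ[k] U k where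
  toFun v := (Phi k g v).snd
  map_add' x y := by simp
  map_smul' r x := by simp [snd_smul]

lemma Dmap_mul (g : Fin 2 → U k) (u v : U k) :
    Dmap k g (u * v) = Dmap k g u * v + u * Dmap k g v := by
  simp only [Dmap, LinearMap.coe_mk, AddHom.coe_mk, map_mul, snd_mul, fst_Phi]
  rw [smul_eq_mul, op_smul_eq_mul, add_comm]

lemma Dmap_ι (g : Fin 2 → U k) (i : Fin 2) : Dmap k g (FreeAlgebra.ι k i) = g i := by
  simp [Dmap, Phi]

lemma Dmap_one (g : Fin 2 → U k) : Dmap k g 1 = 0 := by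
  simp [Dmap]

lemma Dmap_listProd (g : Fin 2 → U k) (l : List (Fin 2)) :
    Dmap k g ((l.map (FreeAlgebra.ι k)).prod)
      = ∑ i ∈ Finset.range l.length,
          ((l.take i).map (FreeAlgebra.ι k)).prod * g (l.getD i 0) *
            ((l.drop (i + 1)).map (FreeAlgebra.ι k)).prod := by
  induction l with
  | nil => simp [Dmap_one]
  | cons a t iht =>
    rw [List.map_cons, List.prod_cons, Dmap_mul, iht, List.length_cons,
      Finset.sum_range_succ']
    simp only [List.take_succ_cons, List.getD_cons_succ, List.drop_succ_cons,
      List.take_zero, List.map_nil, List.prod_nil, one_mul, List.getD_cons_zero,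
      List.drop_zero, List.map_cons, List.prod_cons, Finset.mul_sum]
    rw [Dmap_ι, add_comm]
    congr 1
    apply Finset.sum_congr rfl
    intro i _
    rw [mul_assoc, mul_assoc, mul_assoc]

lemma symm_single (w : FreeMonoid (Fin 2)) :
    (FreeAlgebra.equivMonoidAlgebraFreeMonoid (R := k) (X := Fin 2)).symm
        (MonoidAlgebra.single w 1)
      = ((FreeMonoid.toList w).map (FreeAlgebra.ι k)).prod := by
  induction w using FreeMonoid.recOn with
  | one => simp [MonoidAlgebra.one_def]
  | of_mul i t iht =>
    rw [show MonoidAlgebra.single (FreeMonoid.of i * t) (1:k)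
          = MonoidAlgebra.single (FreeMonoid.of i) 1 * MonoidAlgebra.single t 1 by
        rw [MonoidAlgebra.single_mul_single, one_mul]]
    rw [map_mul, iht]
    simp [FreeAlgebra.equivMonoidAlgebraFreeMonoid]

lemma basis_eq (w : FreeMonoid (Fin 2)) :
    FreeAlgebra.basisFreeMonoid k (Fin 2) w
      = ((FreeMonoid.toList w).map (FreeAlgebra.ι k)).prod := by
  rw [FreeAlgebra.basisFreeMonoid, Module.Basis.map_apply, Finsupp.coe_basisSingleOne]
  exact symm_single k w

lemma derOn_eq_Dmap (g : Fin 2 → U k) : derOn k g = Dmap k g := by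
  apply (FreeAlgebra.basisFreeMonoid k (Fin 2)).ext
  intro w
  rw [derOn, Module.Basis.constr_basis, basis_eq, Dmap_listProd]

lemma derOn_mul (g : Fin 2 → U k) (u v : U k) :
    derOn k g (u * v) = derOn k g u * v + u * derOn k g v := by
  rw [derOn_eq_Dmap]; exact Dmap_mul k g u v

lemma derOn_ι (g : Fin 2 → U k) (i : Fin 2) : derOn k g (FreeAlgebra.ι k i) = g i := by
  rw [derOn_eq_Dmap]; exact Dmap_ι k g i

/-- dF is a derivation. -/
lemma dF_mul (ψ u v : U k) : dF k ψ (u * v) = dF k ψ u * v + u * dF k ψ v :=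
  derOn_mul k _ u v

lemma dF_X0 (ψ : U k) : dF k ψ (X0 k) = 0 := by
  rw [dF, X0, derOn_ι]; rfl

lemma dF_X1 (ψ : U k) : dF k ψ (X1 k) = X1 k * ψ - ψ * X1 k := by
  rw [dF, X1, derOn_ι]; rfl

/-- linearity of `dF` in `ψ`. -/
lemma derOn_g_add (g h : Fin 2 → U k) : derOn k (g + h) = derOn k g + derOn k h := by
  apply (FreeAlgebra.basisFreeMonoid k (Fin 2)).ext
  intro w
  simp only [derOn, Module.Basis.constr_basis, LinearMap.add_apply, Pi.add_apply,
    mul_add, add_mul, Finset.sum_add_distrib]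

lemma derOn_g_smul (r : k) (g : Fin 2 → U k) : derOn k (r • g) = r • derOn k g := by
  apply (FreeAlgebra.basisFreeMonoid k (Fin 2)).ext
  intro w
  simp only [derOn, Module.Basis.constr_basis, LinearMap.smul_apply, Pi.smul_apply,
    Finset.smul_sum, mul_smul_comm, smul_mul_assoc]

lemma dF_add_smul (r : k) (a b : U k) : dF k (a + r • b) = dF k a + r • dF k b := by
  have h1 : (![0, X1 k * (a + r • b) - (a + r • b) * X1 k] : Fin 2 → U k)
      = ![0, X1 k * a - a * X1 k] + r • ![0, X1 k * b - b * X1 k] := by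
    funext i
    fin_cases i
    · simp
    · simp [mul_add, add_mul, mul_smul_comm, smul_mul_assoc, smul_sub]
      abel
  rw [dF, h1, derOn_g_add, derOn_g_smul]
  rfl

/-- Two derivations that agree on generators agree everywhere. -/
lemma der_ext (D1 D2 : U k →ₗ[k] U k)
    (h1 : ∀ u v, D1 (u * v) = D1 u * v + u * D1 v)
    (h2 : ∀ u v, D2 (u * v) = D2 u * v + u * D2 v)
    (hι : ∀ i, D1 (FreeAlgebra.ι k i) = D2 (FreeAlgebra.ι k i)) : D1 = D2 := by
  have hone1 : D1 1 = 0 := by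
    have := h1 1 1; simpa using this.symm
  have hone2 : D2 1 = 0 := by
    have := h2 1 1; simpa using this.symm
  ext v
  induction v using FreeAlgebra.induction with
  | grade0 r =>
    rw [show (algebraMap k (U k) r) = r • (1 : U k) by simp [Algebra.smul_def],
      map_smul, map_smul, hone1, hone2]
  | grade1 i => exact hι i
  | mul u v hu hv => rw [h1, h2, hu, hv]
  | add u v hu hv => rw [map_add, map_add, hu, hv]

/-- The key operator identity: `d_{ {ψ₁,ψ₂} } = d_{ψ₂} ∘ d_{ψ₁} − d_{ψ₁} ∘ d_{ψ₂}`. -/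
lemma dF_br (a b : U k) :
    dF k (br k a b) = dF k b ∘ₗ dF k a - dF k a ∘ₗ dF k b := by
  apply der_ext
  · exact dF_mul k _
  · intro u v
    simp only [LinearMap.sub_apply, LinearMap.comp_apply, dF_mul, map_add,
      map_sub, dF_mul]
    noncomm_ring
  · intro i
    fin_cases i
    · show dF k (br k a b) (X0 k)
          = dF k b (dF k a (X0 k)) - dF k a (dF k b (X0 k))
      simp [dF_X0]
    · show dF k (br k a b) (X1 k)
          = dF k b (dF k a (X1 k)) - dF k a (dF k b (X1 k))
      simp only [dF_X1, br, map_sub, dF_mul, mul_sub, sub_mul]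
      noncomm_ring

theorem br_lie_algebra :
    (∀ (r : k) (a b c : U k),
        br k (a + r • b) c = br k a c + r • br k b c ∧
        br k a (b + r • c) = br k a b + r • br k a c) ∧
    (∀ a : U k, br k a a = 0) ∧
    (∀ a b c : U k, br k a (br k b c) + br k b (br k c a) + br k c (br k a b) = 0) := by
  refine ⟨fun r a b c => ⟨?_, ?_⟩, fun a => ?_, fun a b c => ?_⟩
  · simp only [br, dF_add_smul, LinearMap.add_apply, LinearMap.smul_apply,
      map_add, map_smul, add_mul, mul_add, smul_mul_assoc, mul_smul_comm,
      smul_sub]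
    abel
  · simp only [br, dF_add_smul, LinearMap.add_apply, LinearMap.smul_apply,
      map_add, map_smul, add_mul, mul_add, smul_mul_assoc, mul_smul_comm,
      smul_sub]
    abel
  · simp only [br]; abel
  · have e : ∀ x y v : U k, dF k (br k x y) v
        = dF k y (dF k x v) - dF k x (dF k y v) := by
      intro x y v
      rw [dF_br]
      rfl
    have expand : ∀ x y : U k, br k x y
        = dF k y x - dF k x y - (x * y - y * x) := fun _ _ => rfl
    rw [expand a (br k b c), expand b (br k c a), expand c (br k a b), e, e, e]
    simp only [expand, map_sub, dF_mul, mul_sub, sub_mul]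
    noncomm_ring
end
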